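/- Let t = 2r ≥ 2 be fixed. For q ≥ t+1 define ρ(q) = F_PT(q) / F_JCM(q), where F_PT(q) = Σ_{k=1}^{t+1} α_k * C(q+1, k-1)*C(q, t-k+1) with α_k = 2(k-1) for k ≤ r and α_k = t otherwise, and F_JCM(q) = t * C(2q+1, t). Then ρ(q) is strictly decreasing in q, i.e., ρ(q+1) < ρ(q) for all q ≥ t+1. -/

import Mathlib

open Finset

namespace Stmt13Aux

def AA (q t x : ℕ) : ℕ := Nat.choose (q+2) x * Nat.choose (q+1) (t-x)
def bb (q t x : ℕ) : ℕ := Nat.choose (q+1) x * Nat.choose q (t-x)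
def cc (r t x : ℕ) : ℕ := if x < r then 2*x else t
def ww (q t x : ℕ) : ℤ := ((q:ℤ)+2-x) * ((q:ℤ)+1-t+x)

lemma AA_pos {q t x : ℕ} (hq : t+1 ≤ q) (hx : x ≤ t+1) : 0 < AA q t x :=
  Nat.mul_pos (Nat.choose_pos (by omega)) (Nat.choose_pos (by omega))

lemma I1 {q t x : ℕ} (hx : x < t) (hq : t ≤ q) :
    AA q t (x+1) * ((x+1)*(q+2-t+x)) = AA q t x * ((q+2-x)*(t-x)) := by
  obtain ⟨y, hy⟩ : ∃ y, t - x = y + 1 := ⟨t-x-1, by omega⟩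
  have hty : t - (x+1) = y := by omega
  have hq1 : q+2-t+x = q+1-y := by omega
  have e1 : Nat.choose (q+2) (x+1) * (x+1) = Nat.choose (q+2) x * (q+2-x) :=
    Nat.choose_succ_right_eq _ _
  have e2 : Nat.choose (q+1) (y+1) * (y+1) = Nat.choose (q+1) y * (q+1-y) :=
    Nat.choose_succ_right_eq _ _
  unfold AA
  rw [hty, hy, hq1]
  calc Nat.choose (q+2) (x+1) * Nat.choose (q+1) y * ((x+1)*(q+1-y))
      = (Nat.choose (q+2) (x+1) * (x+1)) * (Nat.choose (q+1) y * (q+1-y)) := by ring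
    _ = (Nat.choose (q+2) x * (q+2-x)) * (Nat.choose (q+1) (y+1) * (y+1)) := by rw [e1, ← e2]
    _ = Nat.choose (q+2) x * Nat.choose (q+1) (y+1) * ((q+2-x)*(y+1)) := by ring

lemma I2 {q t x : ℕ} (hx1 : 1 ≤ x) (hxt : x ≤ t) (hq : t ≤ q) :
    AA q t (t+1-x) * ((t+1-x)*(q+2-x)) = AA q t (t-x) * ((q+2-t+x)*x) := by
  have h := I1 (q := q) (t := t) (x := t-x) (by omega) hq
  rw [show t-x+1 = t+1-x from by omega, show q+2-t+(t-x) = q+2-x from by omega,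
      show q+2-(t-x) = q+2-t+x from by omega, show t-(t-x) = x from by omega] at h
  exact h

lemma adj {q t r j : ℕ} (ht : t = 2*r) (hq : t+1 ≤ q) (hj1 : 1 ≤ j) (hj : j+1 ≤ r-1) :
    (r-(j+1)) * (AA q t (j+1) * AA q t (t+1-j)) ≤ (r-j) * (AA q t j * AA q t (t-j)) := by
  have hr3 : 3 ≤ r := by omega
  have hM : 0 < ((j+1)*(q+2-t+j)) * ((t+1-j)*(q+2-j)) :=
    Nat.mul_pos (Nat.mul_pos (by omega) (by omega)) (Nat.mul_pos (by omega) (by omega))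
  refine Nat.le_of_mul_le_mul_right ?_ hM
  have i1 := I1 (q := q) (t := t) (x := j) (by omega) (by omega)
  have i2 := I2 (q := q) (t := t) (x := j) (by omega) (by omega) (by omega)
  calc (r-(j+1)) * (AA q t (j+1) * AA q t (t+1-j)) * (((j+1)*(q+2-t+j)) * ((t+1-j)*(q+2-j)))
      = (r-(j+1)) * ((AA q t (j+1) * ((j+1)*(q+2-t+j))) * (AA q t (t+1-j) * ((t+1-j)*(q+2-j)))) := by
        ring
    _ = (r-(j+1)) * ((AA q t j * ((q+2-j)*(t-j))) * (AA q t (t-j) * ((q+2-t+j)*j))) := by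
        rw [i1, i2]
    _ = ((r-(j+1)) * j * (t-j)) * (AA q t j * AA q t (t-j) * ((q+2-j)*(q+2-t+j))) := by ring
    _ ≤ ((r-j) * (j+1) * (t+1-j)) * (AA q t j * AA q t (t-j) * ((q+2-j)*(q+2-t+j))) :=
        Nat.mul_le_mul (Nat.mul_le_mul (Nat.mul_le_mul (by omega) (by omega)) (by omega)) le_rfl
    _ = (r-j) * (AA q t j * AA q t (t-j)) * (((j+1)*(q+2-t+j)) * ((t+1-j)*(q+2-j))) := by ring

lemma star {q t r u : ℕ} (ht : t = 2*r) (hq : t+1 ≤ q) (hu : 1 ≤ u) :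
    ∀ j, u ≤ j → j ≤ r-1 →
    (r-j) * (AA q t j * AA q t (t+1-u)) ≤ (r-u) * (AA q t u * AA q t (t+1-j)) := by
  intro j huj
  induction j, huj using Nat.le_induction with
  | base => intro _; exact le_rfl
  | succ j huj IH =>
    intro hj1
    have IH' := IH (by omega)
    have hadj := adj ht hq (by omega) hj1
    have hm : 0 < (r-j) * (AA q t j * AA q t (t+1-j)) :=
      Nat.mul_pos (by omega) (Nat.mul_pos (AA_pos hq (by omega)) (AA_pos hq (by omega)))
    refine Nat.le_of_mul_le_mul_right ?_ hm
    rw [show t+1-(j+1) = t-j from by omega]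
    calc (r-(j+1)) * (AA q t (j+1) * AA q t (t+1-u)) * ((r-j) * (AA q t j * AA q t (t+1-j)))
        = ((r-(j+1)) * (AA q t (j+1) * AA q t (t+1-j))) * ((r-j) * (AA q t j * AA q t (t+1-u))) := by
          ring
      _ ≤ ((r-j) * (AA q t j * AA q t (t-j))) * ((r-u) * (AA q t u * AA q t (t+1-j))) :=
          Nat.mul_le_mul hadj IH'
      _ = (r-u) * (AA q t u * AA q t (t-j)) * ((r-j) * (AA q t j * AA q t (t+1-j))) := by ring

lemma Kb {q t x : ℕ} (hx : x ≤ t) (hq : t+1 ≤ q) :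
    ((q:ℤ)+2)*((q:ℤ)+1) * (bb q t x : ℤ) = (AA q t x : ℤ) * ww q t x := by
  have h1 : Nat.choose (q+1) x * (q+1+1) = Nat.choose (q+1+1) x * (q+1+1-x) :=
    Nat.choose_mul_succ_eq (q+1) x
  have h2 : Nat.choose q (t-x) * (q+1) = Nat.choose (q+1) (t-x) * (q+1-(t-x)) :=
    Nat.choose_mul_succ_eq q (t-x)
  have hN : bb q t x * ((q+2)*(q+1)) = AA q t x * ((q+2-x)*(q+1-(t-x))) := by
    unfold bb AA
    calc Nat.choose (q+1) x * Nat.choose q (t-x) * ((q+2)*(q+1))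
        = (Nat.choose (q+1) x * (q+1+1)) * (Nat.choose q (t-x) * (q+1)) := by ring
      _ = (Nat.choose (q+1+1) x * (q+1+1-x)) * (Nat.choose (q+1) (t-x) * (q+1-(t-x))) := by
          rw [h1, h2]
      _ = Nat.choose (q+2) x * Nat.choose (q+1) (t-x) * ((q+2-x)*(q+1-(t-x))) := by
          rw [show q+1+1 = q+2 from rfl]; ring
  have c1 : ((q+2-x : ℕ) : ℤ) = (q:ℤ)+2-x := by omega
  have c2 : ((q+1-(t-x) : ℕ) : ℤ) = (q:ℤ)+1-t+x := by omega
  calc ((q:ℤ)+2)*((q:ℤ)+1) * (bb q t x : ℤ)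
      = ((bb q t x * ((q+2)*(q+1)) : ℕ) : ℤ) := by push_cast; ring
    _ = ((AA q t x * ((q+2-x)*(q+1-(t-x))) : ℕ) : ℤ) := by rw [hN]
    _ = (AA q t x : ℤ) * (((q+2-x : ℕ) : ℤ) * ((q+1-(t-x) : ℕ) : ℤ)) := by push_cast; ring
    _ = (AA q t x : ℤ) * ww q t x := by rw [c1, c2]; unfold ww; ring


def GG (q t r : ℕ) (p : ℕ × ℕ) : ℤ :=
  (cc r t p.1 : ℤ) * (AA q t p.1 : ℤ) * (AA q t p.2 : ℤ) * (ww q t p.1 - ww q t p.2)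

def DD (q t r : ℕ) (p : ℕ × ℕ) : ℤ := GG q t r p + GG q t r p.swap

lemma DD_val (q t r j i : ℕ) :
    DD q t r (j, i) =
      ((cc r t i : ℤ) - (cc r t j : ℤ)) * (AA q t j : ℤ) * (AA q t i : ℤ)
        * (ww q t i - ww q t j) := by
  unfold DD GG
  simp only [Prod.swap, Prod.fst, Prod.snd]
  ring

-- square-sum splitting
lemma sq_split (q t r : ℕ) :
    ∑ p ∈ (range (t+1)) ×ˢ (range (t+1)), GG q t r p
      = ∑ p ∈ ((range (t+1)) ×ˢ (range (t+1))).filter (fun p => p.1 < p.2), DD q t r p := by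
  set sq := (range (t+1)) ×ˢ (range (t+1)) with hsq
  set P := sq.filter (fun p => p.1 < p.2) with hP
  have h1 : ∑ p ∈ P, GG q t r p.swap = ∑ p ∈ sq.filter (fun p => p.2 < p.1), GG q t r p := by
    refine Finset.sum_nbij' Prod.swap Prod.swap ?_ ?_ ?_ ?_ ?_
    · intro a ha
      simp only [hP, hsq, mem_filter, mem_product, mem_range] at ha ⊢
      exact ⟨⟨ha.1.2, ha.1.1⟩, ha.2⟩
    · intro a ha
      simp only [hP, hsq, mem_filter, mem_product, mem_range] at ha ⊢
      exact ⟨⟨ha.1.2, ha.1.1⟩, ha.2⟩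
    · intro a _; simp
    · intro a _; simp
    · intro a _; rfl
  have h3 : ∑ p ∈ sq.filter (fun p => ¬ p.1 < p.2), GG q t r p
      = ∑ p ∈ sq.filter (fun p => p.2 < p.1), GG q t r p := by
    rw [← Finset.sum_filter_add_sum_filter_not (sq.filter fun p => ¬ p.1 < p.2)
      (fun p => p.2 < p.1) (GG q t r), Finset.filter_filter, Finset.filter_filter]
    have e1 : sq.filter (fun p => ¬ p.1 < p.2 ∧ p.2 < p.1) = sq.filter (fun p => p.2 < p.1) := by
      apply Finset.filter_congr; intro p _; constructor
      · exact fun h => h.2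
      · exact fun h => ⟨by omega, h⟩
    have e2 : ∑ p ∈ sq.filter (fun p => ¬ p.1 < p.2 ∧ ¬ p.2 < p.1), GG q t r p = 0 := by
      apply Finset.sum_eq_zero
      intro p hp
      simp only [mem_filter] at hp
      have hpp : p.1 = p.2 := by omega
      unfold GG; rw [hpp]; ring
    rw [e1, e2, add_zero]
  have hsplit := Finset.sum_filter_add_sum_filter_not sq (fun p => p.1 < p.2) (GG q t r)
  unfold DD
  rw [Finset.sum_add_distrib, h1, ← hsplit, h3]


lemma ww_sub (q t j i : ℕ) : ww q t i - ww q t j = ((i:ℤ) - j) * ((t:ℤ) + 1 - i - j) := by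
  unfold ww; ring

lemma ww_sym {q t x : ℕ} (hx : x ≤ t+1) : ww q t (t+1-x) = ww q t x := by
  have c : ((t+1-x : ℕ) : ℤ) = (t:ℤ)+1-x := by omega
  unfold ww; rw [c]; ring

lemma claim1 {q t r j i : ℕ} (hr : 1 ≤ r) (ht : t = 2*r) (hq : t+1 ≤ q)
    (hji : j < i) (hit : i ≤ t) (hnb : ¬ (t+2 ≤ j+i ∧ j < r)) :
    0 ≤ DD q t r (j, i) := by
  rw [DD_val]
  by_cases hjr : j < r
  · have hij : j + i ≤ t+1 := by
      by_contra h; exact hnb ⟨by omega, hjr⟩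
    have hc : cc r t j ≤ cc r t i := by unfold cc; split_ifs <;> omega
    refine mul_nonneg (mul_nonneg (mul_nonneg ?_ ?_) ?_) ?_
    · have : (cc r t j : ℤ) ≤ (cc r t i : ℤ) := by exact_mod_cast hc
      omega
    · positivity
    · positivity
    · rw [ww_sub]
      exact mul_nonneg (by omega) (by omega)
  · have h1 : cc r t j = t := by unfold cc; rw [if_neg (by omega)]
    have h2 : cc r t i = t := by unfold cc; rw [if_neg (by omega)]
    rw [h1, h2]
    simp

lemma claim2 {q t r j i : ℕ} (hr : 1 ≤ r) (ht : t = 2*r) (hq : t+1 ≤ q)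
    (hji : j < i) (hit : i ≤ t) (hb1 : t+2 ≤ j+i) (hb2 : j < r) :
    0 ≤ DD q t r (j, i) + DD q t r (t+1-i, t+1-j) := by
  have hj2 : 2 ≤ j := by omega
  have hir : r+3 ≤ i := by omega
  have hu1 : 1 ≤ t+1-i := by omega
  have hur : t+1-i ≤ r-2 := by omega
  -- star
  have hst := star ht hq hu1 j (by omega) (by omega)
  rw [show t+1-(t+1-i) = i from by omega] at hst
  -- cast star to ℤ
  have hstZ : ((r:ℤ) - j) * ((AA q t j : ℤ) * (AA q t i : ℤ))
      ≤ ((r:ℤ) - (t+1-i : ℕ)) * ((AA q t (t+1-i) : ℤ) * (AA q t (t+1-j) : ℤ)) := by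
    have c3 : ((r-j : ℕ) : ℤ) = (r:ℤ) - j := by omega
    have c4 : ((r-(t+1-i) : ℕ) : ℤ) = (r:ℤ) - (t+1-i : ℕ) := by omega
    calc ((r:ℤ) - j) * ((AA q t j : ℤ) * (AA q t i : ℤ))
        = (((r-j) * (AA q t j * AA q t i) : ℕ) : ℤ) := by rw [← c3]; push_cast; ring
      _ ≤ (((r-(t+1-i)) * (AA q t (t+1-i) * AA q t (t+1-j)) : ℕ) : ℤ) := by
          exact_mod_cast hst
      _ = ((r:ℤ) - (t+1-i : ℕ)) * ((AA q t (t+1-i) : ℤ) * (AA q t (t+1-j) : ℤ)) := by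
          rw [← c4]; push_cast; ring
  rw [DD_val, DD_val]
  -- cc values
  have ccj : cc r t j = 2*j := by unfold cc; rw [if_pos hb2]
  have cci : cc r t i = t := by unfold cc; rw [if_neg (by omega)]
  have ccu : cc r t (t+1-i) = 2*(t+1-i) := by unfold cc; rw [if_pos (by omega)]
  have ccv : cc r t (t+1-j) = t := by unfold cc; rw [if_neg (by omega)]
  rw [ccj, cci, ccu, ccv, ww_sym (by omega), ww_sym (by omega)]
  -- now : 0 ≤ ((t:ℤ) - 2j)*Aj*Ai*(wwi - wwj) + ((t:ℤ) - 2(t+1-i))*Au*Av*(wwj - wwi)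
  have key : ((t:ℤ) - (2*j:ℕ)) * (AA q t j : ℤ) * (AA q t i : ℤ) * (ww q t i - ww q t j)
        + ((t:ℤ) - (2*(t+1-i):ℕ)) * (AA q t (t+1-i) : ℤ) * (AA q t (t+1-j) : ℤ)
          * (ww q t j - ww q t i)
      = (ww q t j - ww q t i) *
        (2 * (((r:ℤ) - (t+1-i:ℕ)) * ((AA q t (t+1-i) : ℤ) * (AA q t (t+1-j) : ℤ))
          - ((r:ℤ) - j) * ((AA q t j : ℤ) * (AA q t i : ℤ)))) := by
    have c5 : ((2*(t+1-i) : ℕ) : ℤ) = 2*((t:ℤ)+1-i) := by omega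
    have c6 : ((t+1-i : ℕ) : ℤ) = (t:ℤ)+1-i := by omega
    rw [c5, c6]
    push_cast
    rw [ht]; push_cast; ring
  rw [key]
  refine mul_nonneg ?_ (by linarith)
  rw [show ww q t j - ww q t i = ((i:ℤ) - j) * ((i:ℤ) + j - t - 1) from by unfold ww; ring]
  exact mul_nonneg (by omega) (by omega)

lemma DD01_pos {q t r : ℕ} (hr : 1 ≤ r) (ht : t = 2*r) (hq : t+1 ≤ q) :
    0 < DD q t r (0, 1) := by
  rw [DD_val]
  have h0 : cc r t 0 = 0 := by unfold cc; rw [if_pos (show 0 < r from hr)]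
  have h1 : 2 ≤ cc r t 1 := by unfold cc; split_ifs <;> omega
  have hw : ww q t 1 - ww q t 0 = (t:ℤ) := by unfold ww; ring
  rw [h0, hw]
  have hA0 : 0 < AA q t 0 := AA_pos hq (by omega)
  have hA1 : 0 < AA q t 1 := AA_pos hq (by omega)
  have : (0:ℤ) < (cc r t 1 : ℤ) - (0:ℕ) := by
    have : (2:ℤ) ≤ (cc r t 1 : ℤ) := by exact_mod_cast h1
    simp; omega
  refine mul_pos (mul_pos (mul_pos ?_ ?_) ?_) ?_
  · simpa using this
  · exact_mod_cast hA0
  · exact_mod_cast hA1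
  · exact_mod_cast (by omega : 0 < t)


lemma pairsum_pos {t r q : ℕ} (hr : 1 ≤ r) (ht : t = 2*r) (hq : t+1 ≤ q) :
    0 < ∑ p ∈ ((range (t+1)) ×ˢ (range (t+1))).filter (fun p => p.1 < p.2), DD q t r p := by
  have ht2 : 2 ≤ t := by omega
  set P := ((range (t+1)) ×ˢ (range (t+1))).filter (fun p => p.1 < p.2) with hP
  have hmemP : ∀ p : ℕ × ℕ, p ∈ P ↔ p.1 < p.2 ∧ p.2 ≤ t := by
    intro p
    simp only [hP, mem_filter, mem_product, mem_range]
    omega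
  set bad : ℕ × ℕ → Prop := fun p => t+2 ≤ p.1+p.2 ∧ p.1 < r with hbad
  have hdec : DecidablePred bad := fun p => by unfold bad; infer_instance
  set B := P.filter bad with hB
  set Gd := P.filter (fun p => ¬ bad p) with hGd
  have hsplit : ∑ p ∈ P, DD q t r p = ∑ p ∈ B, DD q t r p + ∑ p ∈ Gd, DD q t r p :=
    (Finset.sum_filter_add_sum_filter_not P bad _).symm
  set φ : ℕ × ℕ → ℕ × ℕ := fun p => (t+1-p.2, t+1-p.1) with hφ
  have hmemB : ∀ p : ℕ × ℕ, p ∈ B ↔ (p.1 < p.2 ∧ p.2 ≤ t) ∧ (t+2 ≤ p.1+p.2 ∧ p.1 < r) := by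
    intro p
    rw [hB, mem_filter, hmemP]
  have hmemGd : ∀ p : ℕ × ℕ, p ∈ Gd ↔ (p.1 < p.2 ∧ p.2 ≤ t) ∧ ¬(t+2 ≤ p.1+p.2 ∧ p.1 < r) := by
    intro p
    rw [hGd, mem_filter, hmemP]
  have hφGd : ∀ p ∈ B, φ p ∈ Gd := by
    intro p hp
    rw [hmemB] at hp
    rw [hmemGd, hφ]
    simp only
    omega
  have h01Gd : ((0:ℕ), (1:ℕ)) ∈ Gd := by
    rw [hmemGd]
    simp only
    omega
  have h01not : ((0:ℕ), (1:ℕ)) ∉ B.image φ := by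
    intro h
    obtain ⟨a, ha, hae⟩ := Finset.mem_image.mp h
    rw [hmemB] at ha
    rw [hφ] at hae
    have h1 := congrArg Prod.snd hae
    simp only at h1
    omega
  have hins : insert ((0:ℕ),(1:ℕ)) (B.image φ) ⊆ Gd := by
    intro p hp
    rcases Finset.mem_insert.mp hp with h | h
    · rw [h]; exact h01Gd
    · obtain ⟨a, ha, hae⟩ := Finset.mem_image.mp h
      rw [← hae]; exact hφGd a ha
  have hGd_nonneg : ∀ p ∈ Gd, 0 ≤ DD q t r p := by
    intro p hp
    rw [hmemGd] at hp
    obtain ⟨⟨h1, h2⟩, h3⟩ := hp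
    have := claim1 hr ht hq h1 h2 h3
    simpa using this
  have h2 : ∑ p ∈ insert ((0:ℕ),(1:ℕ)) (B.image φ), DD q t r p ≤ ∑ p ∈ Gd, DD q t r p :=
    Finset.sum_le_sum_of_subset_of_nonneg hins (fun i hi _ => hGd_nonneg i hi)
  have h3 : ∑ p ∈ insert ((0:ℕ),(1:ℕ)) (B.image φ), DD q t r p
      = DD q t r (0,1) + ∑ p ∈ B.image φ, DD q t r p := Finset.sum_insert h01not
  have h4 : ∑ p ∈ B.image φ, DD q t r p = ∑ p ∈ B, DD q t r (φ p) := by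
    apply Finset.sum_image
    intro x hx y hy hxy
    rw [Finset.mem_coe, hmemB] at hx hy
    rw [hφ] at hxy
    have e1 := congrArg Prod.fst hxy
    have e2 := congrArg Prod.snd hxy
    simp only at e1 e2
    have : x.1 = y.1 := by omega
    have : x.2 = y.2 := by omega
    exact Prod.ext (by omega) (by omega)
  have h5 : 0 ≤ ∑ p ∈ B, (DD q t r p + DD q t r (φ p)) := by
    apply Finset.sum_nonneg
    intro p hp
    rw [hmemB] at hp
    obtain ⟨⟨h1, h2'⟩, h3', h4'⟩ := hp
    have := claim2 hr ht hq h1 h2' h3' h4'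
    rw [hφ]
    simpa using this
  rw [Finset.sum_add_distrib] at h5
  have h6 := DD01_pos (q := q) hr ht hq
  rw [hsplit]
  linarith

lemma keyN {t r q : ℕ} (hr : 1 ≤ r) (ht : t = 2*r) (hq : t+1 ≤ q) :
    (∑ x ∈ range (t+1), cc r t x * AA q t x) * (∑ x ∈ range (t+1), bb q t x)
      < (∑ x ∈ range (t+1), cc r t x * bb q t x) * (∑ x ∈ range (t+1), AA q t x) := by
  have hZ : (∑ x ∈ range (t+1), (cc r t x : ℤ) * (AA q t x : ℤ))
        * (∑ x ∈ range (t+1), (bb q t x : ℤ))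
      < (∑ x ∈ range (t+1), (cc r t x : ℤ) * (bb q t x : ℤ))
        * (∑ x ∈ range (t+1), (AA q t x : ℤ)) := by
    rw [← sub_pos]
    set d : ℤ := (∑ x ∈ range (t+1), (cc r t x : ℤ) * (bb q t x : ℤ))
        * (∑ x ∈ range (t+1), (AA q t x : ℤ))
      - (∑ x ∈ range (t+1), (cc r t x : ℤ) * (AA q t x : ℤ))
        * (∑ x ∈ range (t+1), (bb q t x : ℤ)) with hd
    have hKd : ((q:ℤ)+2)*((q:ℤ)+1) * d
        = ∑ p ∈ (range (t+1)) ×ˢ (range (t+1)), GG q t r p := by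
      rw [Finset.sum_product, hd, Finset.sum_mul_sum, Finset.sum_mul_sum,
        mul_sub, Finset.mul_sum, Finset.mul_sum, ← Finset.sum_sub_distrib]
      apply Finset.sum_congr rfl
      intro j hj
      rw [Finset.mul_sum, Finset.mul_sum, ← Finset.sum_sub_distrib]
      apply Finset.sum_congr rfl
      intro i hi
      simp only [mem_range] at hj hi
      have kbj := Kb (show j ≤ t by omega) hq
      have kbi := Kb (show i ≤ t by omega) hq
      unfold GG
      simp only
      linear_combination ((cc r t j : ℤ) * (AA q t i : ℤ)) * kbj
        - ((cc r t j : ℤ) * (AA q t j : ℤ)) * kbi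
    have hpos := pairsum_pos (q := q) hr ht hq
    rw [← sq_split] at hpos
    by_contra hcon
    push_neg at hcon
    have hK0 : (0:ℤ) ≤ ((q:ℤ)+2)*((q:ℤ)+1) := by positivity
    have h2 : ((q:ℤ)+2)*((q:ℤ)+1)*d ≤ 0 := mul_nonpos_iff.mpr (Or.inl ⟨hK0, hcon⟩)
    rw [hKd] at h2
    linarith
  exact_mod_cast hZ


lemma bbA (q t x : ℕ) : bb (q+1) t x = AA q t x := rfl

lemma vand (q t : ℕ) : Nat.choose (2*q+1) t = ∑ x ∈ range (t+1), bb q t x := by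
  rw [show 2*q+1 = (q+1)+q from by ring, Nat.add_choose_eq,
    Finset.Nat.sum_antidiagonal_eq_sum_range_succ_mk]
  rfl

end Stmt13Aux

open Stmt13Aux in
theorem stmt_13 (t r : ℕ) (hr : 1 ≤ r) (ht : t = 2 * r)
    (α : ℕ → ℕ) (hα : ∀ k, α k = if k ≤ r then 2 * (k - 1) else t)
    (FPT FJCM : ℕ → ℕ)
    (hFPT : ∀ q, FPT q = ∑ k ∈ Finset.Icc 1 (t + 1),
        α k * (Nat.choose (q + 1) (k - 1) * Nat.choose q (t + 1 - k)))
    (hFJCM : ∀ q, FJCM q = t * Nat.choose (2 * q + 1) t) :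
    ∀ q, t + 1 ≤ q →
      (FPT (q + 1) : ℚ) / (FJCM (q + 1) : ℚ) < (FPT q : ℚ) / (FJCM q : ℚ) := by
  intro q hq
  have ht2 : 2 ≤ t := by omega
  have hFPTgen : ∀ q', FPT q' = ∑ x ∈ range (t+1), cc r t x * bb q' t x := by
    intro q'
    rw [hFPT q']
    refine Finset.sum_nbij' (fun k => k - 1) (fun x => x + 1) ?_ ?_ ?_ ?_ ?_
    · intro a ha
      simp only [mem_Icc] at ha
      simp only [mem_range]
      show a - 1 < t + 1
      omega
    · intro a ha
      simp only [mem_range] at ha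
      simp only [mem_Icc]
      show 1 ≤ a + 1 ∧ a + 1 ≤ t + 1
      omega
    · intro a ha
      simp only [mem_Icc] at ha
      show a - 1 + 1 = a
      omega
    · intro a _
      show a + 1 - 1 = a
      omega
    · intro k hk
      simp only [mem_Icc] at hk
      show α k * (Nat.choose (q' + 1) (k - 1) * Nat.choose q' (t + 1 - k))
        = cc r t (k-1) * bb q' t (k-1)
      rw [hα k]
      unfold cc bb
      rw [show t+1-k = t-(k-1) from by omega]
      congr 1
      by_cases h : k ≤ r
      · rw [if_pos h, if_pos (by omega)]
      · rw [if_neg h, if_neg (by omega)]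
  have hFJq : 0 < FJCM q := by
    rw [hFJCM]
    exact Nat.mul_pos (by omega) (Nat.choose_pos (by omega))
  have hFJq1 : 0 < FJCM (q+1) := by
    rw [hFJCM]
    exact Nat.mul_pos (by omega) (Nat.choose_pos (by omega))
  rw [div_lt_div_iff₀ (by exact_mod_cast hFJq1) (by exact_mod_cast hFJq)]
  have hN : FPT (q+1) * FJCM q < FPT q * FJCM (q+1) := by
    have e1 := hFPTgen q
    have e2 : FPT (q+1) = ∑ x ∈ range (t+1), cc r t x * AA q t x := by
      rw [hFPTgen (q+1)]
      exact Finset.sum_congr rfl (fun x _ => by rw [bbA])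
    have e3 : FJCM q = t * ∑ x ∈ range (t+1), bb q t x := by rw [hFJCM, vand]
    have e4 : FJCM (q+1) = t * ∑ x ∈ range (t+1), AA q t x := by
      rw [hFJCM, vand]
      exact congrArg _ (Finset.sum_congr rfl (fun x _ => by rw [bbA]))
    rw [e1, e2, e3, e4]
    rw [show (∑ x ∈ range (t+1), cc r t x * AA q t x) * (t * ∑ x ∈ range (t+1), bb q t x)
        = t * ((∑ x ∈ range (t+1), cc r t x * AA q t x) * (∑ x ∈ range (t+1), bb q t x))
        from by ring,
      show (∑ x ∈ range (t+1), cc r t x * bb q t x) * (t * ∑ x ∈ range (t+1), AA q t x)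
        = t * ((∑ x ∈ range (t+1), cc r t x * bb q t x) * (∑ x ∈ range (t+1), AA q t x))
        from by ring]
    exact mul_lt_mul_of_pos_left (keyN hr ht hq) (show 0 < t by omega)
  exact_mod_cast hN
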